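/- Let u, v be natural numbers with u, v ≥ 3 and 1/u + 1/v ≤ 1/2, and set w = u. Then B := det b(u,v,w=u) = sin⁴(π/u) − cos²(π/v) < 0; in particular the Coxeter–Schläfli matrix b(u,v,u) is invertible. -/

import Mathlib

open Real Matrix

/-- The Coxeter–Schläfli matrix `b(u,v,w)` of the orthoscheme. -/
noncomputable def CSMatrix (u v w : ℕ) : Matrix (Fin 4) (Fin 4) ℝ :=
  !![1, -Real.cos (Real.pi / u), 0, 0;
     -Real.cos (Real.pi / u), 1, -Real.cos (Real.pi / v), 0;
     0, -Real.cos (Real.pi / v), 1, -Real.cos (Real.pi / w);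
     0, 0, -Real.cos (Real.pi / w), 1]

theorem det_CSMatrix_symmetric_neg (u v : ℕ) (hu : 3 ≤ u) (hv : 3 ≤ v)
    (huv : (1 : ℝ) / u + 1 / v ≤ 1 / 2) :
    (CSMatrix u v u).det = Real.sin (Real.pi / u) ^ 4 - Real.cos (Real.pi / v) ^ 2 ∧
    (CSMatrix u v u).det < 0 ∧
    IsUnit (CSMatrix u v u) := by
  have hu3 : (3:ℝ) ≤ u := by exact_mod_cast hu
  have hv3 : (3:ℝ) ≤ v := by exact_mod_cast hv
  have hu0 : (0:ℝ) < u := by linarith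
  have hv0 : (0:ℝ) < v := by linarith
  have hpi := Real.pi_pos
  have hdet : (CSMatrix u v u).det
      = Real.sin (Real.pi / u) ^ 4 - Real.cos (Real.pi / v) ^ 2 := by
    have hs := Real.sin_sq_add_cos_sq (Real.pi / u)
    rw [CSMatrix]
    simp [Matrix.det_succ_row_zero, Fin.sum_univ_succ, Fin.succAbove]
    nlinarith [hs]
  -- bounds on angles
  have hau0 : 0 < Real.pi / u := div_pos hpi hu0
  have hau : Real.pi / u < Real.pi / 2 := by
    rw [div_lt_div_iff₀ hu0 (by norm_num)]; nlinarith
  have hsin_pos : 0 < Real.sin (Real.pi / u) :=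
    Real.sin_pos_of_pos_of_lt_pi hau0 (by linarith)
  have hcos_pos : 0 < Real.cos (Real.pi / u) :=
    Real.cos_pos_of_mem_Ioo ⟨by linarith, hau⟩
  have hsin2_lt : Real.sin (Real.pi / u) ^ 2 < 1 := by
    have hs := Real.sin_sq_add_cos_sq (Real.pi / u)
    nlinarith
  -- cos(π/v) ≥ sin(π/u)
  have hkey : Real.sin (Real.pi / u) ≤ Real.cos (Real.pi / v) := by
    have : Real.cos (Real.pi / v) = Real.sin (Real.pi / 2 - Real.pi / v) := by
      rw [Real.sin_pi_div_two_sub]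
    rw [this]
    have h1 : Real.pi / u + Real.pi / v ≤ Real.pi / 2 := by
      have := mul_le_mul_of_nonneg_left huv (le_of_lt hpi)
      rw [mul_add] at this
      calc Real.pi / u + Real.pi / v = Real.pi * (1/u) + Real.pi * (1/v) := by ring
        _ ≤ Real.pi * (1/2) := this
        _ = Real.pi / 2 := by ring
    have hv2 : 0 < Real.pi / v := div_pos hpi hv0
    exact Real.sin_le_sin_of_le_of_le_pi_div_two (by linarith) (by linarith) (by linarith)
  have hneg : Real.sin (Real.pi / u) ^ 4 - Real.cos (Real.pi / v) ^ 2 < 0 := by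
    nlinarith [mul_pos hsin_pos hsin_pos, mul_le_mul hkey hkey (le_of_lt hsin_pos) (by linarith)]
  refine ⟨hdet, by rw [hdet]; exact hneg, ?_⟩
  rw [Matrix.isUnit_iff_isUnit_det, isUnit_iff_ne_zero]
  rw [hdet]; linarith
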